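/- Let H0 = γ^{-1} I with γ > 0, and Ψ an n×m matrix (m ≤ n) with QR decomposition Ψ = Q [R1; 0] where Q is n×n orthogonal and R1 is m×m. Let M̃ be a symmetric m×m matrix and R1 M̃ R1^T = V1 D1 V1^T its spectral decomposition. Then H = H0 + Ψ M̃ Ψ^T has eigenvalues γ^{-1} + d_i for i = 1,…,m (d_i the diagonal entries of D1) together with γ^{-1} with multiplicity n - m. -/

import Mathlib

open Matrix

theorem compact_inverse_eigenvalues (m p : ℕ) (γ : ℝ) (hγ : γ > 0)
    (Q : Matrix (Fin m ⊕ Fin p) (Fin m ⊕ Fin p) ℝ)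
    (hQ : Q ∈ Matrix.orthogonalGroup (Fin m ⊕ Fin p) ℝ)
    (R1 : Matrix (Fin m) (Fin m) ℝ)
    (Ψ : Matrix (Fin m ⊕ Fin p) (Fin m) ℝ)
    (hΨ : Ψ = Q * Matrix.fromRows R1 (0 : Matrix (Fin p) (Fin m) ℝ))
    (M : Matrix (Fin m) (Fin m) ℝ) (hMsym : Mᵀ = M)
    (V1 : Matrix (Fin m) (Fin m) ℝ)
    (hV1 : V1 ∈ Matrix.orthogonalGroup (Fin m) ℝ)
    (d : Fin m → ℝ)
    (hspec : R1 * M * R1ᵀ = V1 * Matrix.diagonal d * V1ᵀ)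
    (H : Matrix (Fin m ⊕ Fin p) (Fin m ⊕ Fin p) ℝ)
    (hH : H = γ⁻¹ • (1 : Matrix (Fin m ⊕ Fin p) (Fin m ⊕ Fin p) ℝ) + Ψ * M * Ψᵀ) :
    ∃ P ∈ Matrix.orthogonalGroup (Fin m ⊕ Fin p) ℝ,
      H = P * Matrix.diagonal
            (Sum.elim (fun i : Fin m => γ⁻¹ + d i) (fun _ : Fin p => γ⁻¹)) * Pᵀ := by
  have hstar : ∀ (k : Type) (A : Matrix k k ℝ), star A = Aᵀ := by
    intro k A; ext i j; simp [Matrix.star_apply]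
  have hQ1 : Q * Qᵀ = 1 := by rw [← hstar]; exact (Matrix.mem_orthogonalGroup_iff _ _).mp hQ
  have hV1' : V1 * V1ᵀ = 1 := by rw [← hstar]; exact (Matrix.mem_orthogonalGroup_iff _ _).mp hV1
  have hV1'' : V1ᵀ * V1 = 1 := by rw [← hstar]; exact (Matrix.mem_orthogonalGroup_iff' _ _).mp hV1
  set B : Matrix (Fin m ⊕ Fin p) (Fin m ⊕ Fin p) ℝ := Matrix.fromBlocks V1 0 0 1 with hBdef
  have hB : B ∈ Matrix.orthogonalGroup (Fin m ⊕ Fin p) ℝ := by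
    rw [Matrix.mem_orthogonalGroup_iff, hBdef, Matrix.fromBlocks_transpose,
      Matrix.fromBlocks_multiply]
    simp [hV1', Matrix.fromBlocks_one]
  refine ⟨Q * B, mul_mem hQ hB, ?_⟩
  have hdiag : Matrix.diagonal
      (Sum.elim (fun i : Fin m => γ⁻¹ + d i) (fun _ : Fin p => γ⁻¹)) =
      Matrix.fromBlocks (Matrix.diagonal fun i : Fin m => γ⁻¹ + d i) 0 0
        (Matrix.diagonal fun _ : Fin p => γ⁻¹) := by
    rw [Matrix.fromBlocks_diagonal]
  have hdd : Matrix.diagonal (fun i : Fin m => γ⁻¹ + d i) =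
      γ⁻¹ • (1 : Matrix (Fin m) (Fin m) ℝ) + Matrix.diagonal d := by
    ext i j
    by_cases h : i = j <;> simp [h, Matrix.diagonal, Matrix.one_apply]
  have hinner : B * Matrix.diagonal
        (Sum.elim (fun i : Fin m => γ⁻¹ + d i) (fun _ : Fin p => γ⁻¹)) * Bᵀ =
      γ⁻¹ • (1 : Matrix (Fin m ⊕ Fin p) (Fin m ⊕ Fin p) ℝ) +
        Matrix.fromBlocks (V1 * Matrix.diagonal d * V1ᵀ) 0 0 0 := by
    rw [hdiag, hBdef, Matrix.fromBlocks_transpose, Matrix.fromBlocks_multiply,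
      Matrix.fromBlocks_multiply]
    have h1 : (γ⁻¹ • (1 : Matrix (Fin m ⊕ Fin p) (Fin m ⊕ Fin p) ℝ)) =
        Matrix.fromBlocks (γ⁻¹ • (1 : Matrix (Fin m) (Fin m) ℝ)) 0 0
          (γ⁻¹ • (1 : Matrix (Fin p) (Fin p) ℝ)) := by
      rw [← Matrix.fromBlocks_one, Matrix.fromBlocks_smul]; simp
    rw [h1, Matrix.fromBlocks_add, Matrix.fromBlocks_inj]
    refine ⟨?_, by simp, by simp, ?_⟩
    · simp [hdd, Matrix.add_mul, Matrix.mul_add, Matrix.smul_mul, Matrix.mul_smul, hV1', Matrix.mul_assoc]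
    · ext i j
      by_cases h : i = j <;> simp [h, Matrix.diagonal, Matrix.one_apply]
  have hmid : Matrix.fromRows R1 (0 : Matrix (Fin p) (Fin m) ℝ) * M *
      (Matrix.fromRows R1 (0 : Matrix (Fin p) (Fin m) ℝ))ᵀ =
      Matrix.fromBlocks (R1 * M * R1ᵀ) 0 0 0 := by
    rw [Matrix.transpose_fromRows, Matrix.fromRows_mul, Matrix.fromRows_mul_fromCols]
    simp
  rw [hH, hΨ]
  have h2 : Q * Matrix.fromRows R1 (0 : Matrix (Fin p) (Fin m) ℝ) * M *
      (Q * Matrix.fromRows R1 (0 : Matrix (Fin p) (Fin m) ℝ))ᵀ =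
      Q * (Matrix.fromRows R1 (0 : Matrix (Fin p) (Fin m) ℝ) * M *
        (Matrix.fromRows R1 (0 : Matrix (Fin p) (Fin m) ℝ))ᵀ) * Qᵀ := by
    rw [Matrix.transpose_mul]
    simp only [Matrix.mul_assoc]
  have h3 : Q * B * Matrix.diagonal
        (Sum.elim (fun i : Fin m => γ⁻¹ + d i) (fun _ : Fin p => γ⁻¹)) * (Q * B)ᵀ =
      Q * (B * Matrix.diagonal
        (Sum.elim (fun i : Fin m => γ⁻¹ + d i) (fun _ : Fin p => γ⁻¹)) * Bᵀ) * Qᵀ := by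
    rw [Matrix.transpose_mul]
    simp only [Matrix.mul_assoc]
  rw [h2, hmid, hspec, h3, hinner, Matrix.mul_add, Matrix.add_mul, Matrix.mul_smul,
    Matrix.mul_one, Matrix.smul_mul, hQ1, Matrix.mul_assoc]
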